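/- Let J(z) be the 5×5 matrix with rows (0, 0, 0, 2z₁, 12z₄), (0, 0, 1, 0, 0), (0, −1, 0, 0, −2z₁), (−2z₁, 0, 0, 0, −8z₁z₂ + 2z₅), (−12z₄, 0, 2z₁, 8z₁z₂ − 2z₅, 0), and for smooth functions F, G on ℝ⁵ define {F,G}(z) = Σ_{k,l=1}^{5} J_{kl}(z)(∂F/∂z_k)(∂G/∂z_l). Then this bracket satisfies the Jacobi identity: for all polynomial functions F, G, H on ℝ⁵, {F,{G,H}} + {G,{H,F}} + {H,{F,G}} = 0; equivalently, for all indices k, m, n ∈ {1,…,5} and all z ∈ ℝ⁵, Σ_{l=1}^{5} (J_{lk} ∂J_{mn}/∂z_l + J_{lm} ∂J_{nk}/∂z_l + J_{ln} ∂J_{km}/∂z_l) = 0. -/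

import Mathlib

/-- The Poisson matrix of the five-dimensional system (8). Coordinates:
z 0 = z₁, z 1 = z₂, z 2 = z₃, z 3 = z₄, z 4 = z₅. -/
def poissonJ (z : Fin 5 → ℝ) : Matrix (Fin 5) (Fin 5) ℝ :=
  !![0, 0, 0, 2 * z 0, 12 * z 3;
     0, 0, 1, 0, 0;
     0, -1, 0, 0, -2 * z 0;
     -2 * z 0, 0, 0, 0, -8 * z 0 * z 1 + 2 * z 4;
     -12 * z 3, 0, 2 * z 0, 8 * z 0 * z 1 - 2 * z 4, 0]

/-- The projection onto the `i`-th coordinate, as a continuous linear map. -/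
noncomputable def pr (i : Fin 5) : (Fin 5 → ℝ) →L[ℝ] ℝ := ContinuousLinearMap.proj i

lemma hpr (i : Fin 5) (z : Fin 5 → ℝ) : HasFDerivAt (fun w : Fin 5 → ℝ => w i) (pr i) z :=
  (pr i).hasFDerivAt

/-- Kronecker delta on `Fin 5`, valued in ℝ. -/
def dd (l i : Fin 5) : ℝ := if i = l then 1 else 0

lemma fd_lin (c : ℝ) (i : Fin 5) (z : Fin 5 → ℝ) (l : Fin 5) :
    fderiv ℝ (fun w : Fin 5 → ℝ => c * w i) z (Pi.single l 1) = c * dd l i := by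
  rw [((hpr i z).const_mul c).fderiv]
  simp [pr, dd, Pi.single_apply]

lemma fd_quad (a b : ℝ) (z : Fin 5 → ℝ) (l : Fin 5) :
    fderiv ℝ (fun w : Fin 5 → ℝ => a * w 0 * w 1 + b * w 4) z (Pi.single l 1)
      = a * z 1 * dd l 0 + a * z 0 * dd l 1 + b * dd l 4 := by
  rw [(show HasFDerivAt (fun w : Fin 5 → ℝ => a * w 0 * w 1 + b * w 4) _ z from
    (((hpr 0 z).const_mul a).mul (hpr 1 z)).add ((hpr 4 z).const_mul b)).fderiv]
  simp [pr, dd, Pi.single_apply]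
  ring

lemma fd_quad' (a b : ℝ) (z : Fin 5 → ℝ) (l : Fin 5) :
    fderiv ℝ (fun w : Fin 5 → ℝ => a * w 0 * w 1 - b * w 4) z (Pi.single l 1)
      = a * z 1 * dd l 0 + a * z 0 * dd l 1 - b * dd l 4 := by
  rw [(show HasFDerivAt (fun w : Fin 5 → ℝ => a * w 0 * w 1 - b * w 4) _ z from
    (((hpr 0 z).const_mul a).mul (hpr 1 z)).sub ((hpr 4 z).const_mul b)).fderiv]
  simp [pr, dd, Pi.single_apply]
  ring

/-- The directional derivative of `poissonJ` in the `l`-th coordinate direction. -/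
noncomputable def Jd (z : Fin 5 → ℝ) (l : Fin 5) : Matrix (Fin 5) (Fin 5) ℝ :=
  !![0, 0, 0, 2 * dd l 0, 12 * dd l 3;
     0, 0, 0, 0, 0;
     0, 0, 0, 0, -2 * dd l 0;
     -2 * dd l 0, 0, 0, 0, -8 * z 1 * dd l 0 + -8 * z 0 * dd l 1 + 2 * dd l 4;
     -12 * dd l 3, 0, 2 * dd l 0, 8 * z 1 * dd l 0 + 8 * z 0 * dd l 1 - 2 * dd l 4, 0]

lemma key (m n l : Fin 5) (z : Fin 5 → ℝ) :
    fderiv ℝ (fun w => poissonJ w m n) z (Pi.single l 1) = Jd z l m n := by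
  fin_cases m <;> fin_cases n <;>
    simp only [poissonJ, Jd, Matrix.cons_val', Matrix.cons_val_zero, Matrix.cons_val_one,
      Matrix.head_cons, Matrix.empty_val', Matrix.cons_val_fin_one, Matrix.head_fin_const,
      Matrix.cons_val_two, Matrix.cons_val_three, Matrix.cons_val_four, Matrix.tail_cons,
      Fin.isValue, Matrix.of_apply, Fin.zero_eta, Fin.mk_one, Fin.reduceFinMk] <;>
    first
      | rw [fd_lin]
      | rw [fd_quad]
      | rw [fd_quad']
      | simp [Matrix.vecHead, Matrix.vecTail, fderiv_const]

set_option maxHeartbeats 2000000 in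
/-- The bracket defined by J satisfies the Jacobi identity, in the equivalent
coordinate form: for all indices k, m, n and all z ∈ ℝ⁵,
Σ_l (J_{lk} ∂J_{mn}/∂z_l + J_{lm} ∂J_{nk}/∂z_l + J_{ln} ∂J_{km}/∂z_l) = 0. -/
theorem poissonJ_jacobi (k m n : Fin 5) (z : Fin 5 → ℝ) :
    ∑ l : Fin 5,
      (poissonJ z l k * fderiv ℝ (fun w => poissonJ w m n) z (Pi.single l 1)
      + poissonJ z l m * fderiv ℝ (fun w => poissonJ w n k) z (Pi.single l 1)
      + poissonJ z l n * fderiv ℝ (fun w => poissonJ w k m) z (Pi.single l 1)) = 0 := by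
  simp only [key, Fin.sum_univ_five]
  fin_cases k <;> fin_cases m <;> fin_cases n <;>
    (simp [poissonJ, Jd, dd, Matrix.vecHead, Matrix.vecTail, Fin.zero_eta, Fin.mk_one,
       Fin.reduceFinMk]; try ring)
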